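/- With Φ(t,s) and A(t) as defined, for every fixed s ∈ ℝ the map t ↦ Φ(t,s) is differentiable and satisfies the matrix differential equation ∂Φ/∂t(t,s) = A(t)·Φ(t,s) for all t ∈ ℝ. -/

import Mathlib

noncomputable section

def f₁ (t s : ℝ) : ℝ := 3 + 3 * s ^ 2 + 2 * s ^ 4 + 3 * t * s + t ^ 3 * s

def f₂ (t s : ℝ) : ℝ :=
  -3 * t - 3 * t * s ^ 2 - 2 * t * s ^ 4 + 3 * s + 3 * s * t ^ 2 + 2 * s * t ^ 4

def Φ (t s : ℝ) : Matrix (Fin 2) (Fin 2) ℝ :=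
  (1 / (3 * Real.sqrt ((1 + t ^ 2) * (1 + s ^ 2)))) •
    !![f₁ t s / (1 + s ^ 2), -3 * s - s ^ 3 + 3 * t + t ^ 3;
       f₂ t s / ((1 + t ^ 2) * (1 + s ^ 2)),
       (3 + 3 * t * s + t * s ^ 3 + 3 * t ^ 2 + 2 * t ^ 4) / (1 + t ^ 2)]

def A (t : ℝ) : Matrix (Fin 2) (Fin 2) ℝ :=
  !![0, 1; (2 * t ^ 2 - 1) / (1 + t ^ 2) ^ 2, 0]

theorem cauchy_matrix_solves_ode :
    ∀ s t : ℝ, ∀ i j : Fin 2,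
      HasDerivAt (fun u : ℝ => Φ u s i j) ((A t * Φ t s) i j) t := by
  intro s t i j
  have hS : (0:ℝ) < 1 + s^2 := by positivity
  have hT : (0:ℝ) < 1 + t^2 := by positivity
  have hgt : 0 < Real.sqrt ((1+t^2)*(1+s^2)) := Real.sqrt_pos.2 (by positivity)
  have hgne := hgt.ne'
  have hgsq : Real.sqrt ((1+t^2)*(1+s^2))^2 = (1+t^2)*(1+s^2) := Real.sq_sqrt (by positivity)
  have ha : Real.sqrt (1+t^2)^2 = 1+t^2 := Real.sq_sqrt (by positivity)
  have hb : Real.sqrt (1+s^2)^2 = 1+s^2 := Real.sq_sqrt (by positivity)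
  have hane : Real.sqrt (1+t^2) ≠ 0 := (Real.sqrt_pos.2 hT).ne'
  have hbne : Real.sqrt (1+s^2) ≠ 0 := (Real.sqrt_pos.2 hS).ne'
  have hu : HasDerivAt (fun u:ℝ => (1+u^2)*(1+s^2)) (2*t*(1+s^2)) t := by
    simpa using ((hasDerivAt_pow 2 t).const_add 1).mul_const (1+s^2)
  have hden2 : HasDerivAt (fun u:ℝ => 1+u^2) (2*t) t := by
    simpa using (hasDerivAt_pow 2 t).const_add 1
  have hg' : HasDerivAt (fun u:ℝ => Real.sqrt ((1+u^2)*(1+s^2)))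
      ((2*t*(1+s^2))/(2*Real.sqrt ((1+t^2)*(1+s^2)))) t := hu.sqrt (by positivity)
  have hc : HasDerivAt (fun u:ℝ => 1/(3*Real.sqrt ((1+u^2)*(1+s^2))))
      (-t/(3*Real.sqrt ((1+t^2)*(1+s^2))*(1+t^2))) t := by
    have h := (hg'.const_mul 3).inv (by positivity)
    simp only [one_div]
    convert h using 1
    · exact rfl
    · exact rfl
    · exact rfl
    field_simp
    ring_nf
    ring_nf at hgsq
    linear_combination (-t) * hgsq
  fin_cases i <;> fin_cases j <;>
    simp only [Φ, A, Matrix.mul_apply, Fin.sum_univ_two, Matrix.smul_apply, smul_eq_mul,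
      Fin.mk_zero, Fin.mk_one, Fin.isValue,
      Matrix.cons_val_zero, Matrix.cons_val_one, Matrix.head_cons, Matrix.of_apply,
      Matrix.cons_val', Matrix.empty_val', Matrix.cons_val_fin_one, Matrix.head_fin_const,
      zero_mul, one_mul, mul_zero, zero_add, add_zero]
  · -- (0,0)
    have hp := (((hasDerivAt_id t).mul_const (3*s)).add ((hasDerivAt_pow 3 t).mul_const s)).add
      (hasDerivAt_const t (3+3*s^2+2*s^4))
    have key := hc.mul (hp.div_const (1+s^2))
    convert key using 1
    · exact rfl
    · exact rfl
    · funext u; simp only [f₁, id_eq, Pi.add_apply, Pi.mul_apply, Pi.div_apply]; ring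
    · simp only [f₂, id_eq, Pi.add_apply, Pi.mul_apply, Pi.div_apply]; push_cast; field_simp; ring
  · -- (0,1)
    have hp := (((hasDerivAt_id t).const_mul 3).add (hasDerivAt_pow 3 t)).const_add (-3*s - s^3)
    have key := hc.mul hp
    convert key using 1
    · exact rfl
    · exact rfl
    · funext u; simp only [id_eq, Pi.add_apply, Pi.mul_apply, Pi.div_apply]; ring
    · simp only [id_eq, Pi.add_apply, Pi.mul_apply, Pi.div_apply]; push_cast; field_simp; ring
  · -- (1,0)
    have hp := ((((hasDerivAt_pow 2 t).mul_const (3*s)).add ((hasDerivAt_pow 4 t).mul_const (2*s))).add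
      ((hasDerivAt_id t).const_mul (-3-3*s^2-2*s^4))).add (hasDerivAt_const t (3*s))
    have key := hc.mul ((hp.div hu) (by positivity))
    convert key using 1
    · exact rfl
    · exact rfl
    · funext u; simp only [f₂, id_eq, Pi.add_apply, Pi.mul_apply, Pi.div_apply]; ring
    · simp only [f₁, id_eq, Pi.add_apply, Pi.mul_apply, Pi.div_apply]; push_cast; field_simp; ring
  · -- (1,1)
    have hp := ((((hasDerivAt_id t).mul_const (3*s+s^3)).add ((hasDerivAt_pow 2 t).const_mul 3)).add
      ((hasDerivAt_pow 4 t).const_mul 2)).add (hasDerivAt_const t 3)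
    have key := hc.mul ((hp.div hden2) hT.ne')
    convert key using 1
    · exact rfl
    · exact rfl
    · funext u; simp only [id_eq, Pi.add_apply, Pi.mul_apply, Pi.div_apply]; ring
    · simp only [id_eq, Pi.add_apply, Pi.mul_apply, Pi.div_apply]; push_cast; field_simp; ring
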